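/- In the multi-treatment setting with true and estimated nuisances (see context), there exists a constant c depending only on B, ε, k and p such that for every codebook C = (c_1,…,c_k) in ℝ^p with |c_{j,a}| ≤ B for all j and a: |E[φ_C(η̂)] − E[φ_C(η)]| ≤ c·( max_{a} E|μ̂_a − μ_a| + max_{a} ‖μ̂_a − μ_a‖_{L²}·(‖μ̂_a − μ_a‖_{L²} + ‖π̂_a − π_a‖_{L²}) ); consequently the supremum over all such codebooks of the left-hand side obeys the same bound. -/

import Mathlib

open MeasureTheory

/-- View a coordinate function as a point of Euclidean space. -/
def toE {p : ℕ} (f : Fin p → ℝ) : EuclideanSpace ℝ (Fin p) := WithLp.toLp 2 f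

/-- The nearest-center index of `x` under the codebook `C`: the smallest `j`
minimizing `‖x − c_j‖₂`. -/
noncomputable def nearestIdx {p k : ℕ} (hk : 0 < k)
    (C : Fin k → EuclideanSpace ℝ (Fin p)) (x : EuclideanSpace ℝ (Fin p)) : Fin k :=
  (Finset.univ.filter fun j => ∀ m, ‖x - C j‖ ≤ ‖x - C m‖).min'
    (by
      obtain ⟨j, -, hj⟩ :=
        Finset.exists_min_image (Finset.univ : Finset (Fin k)) (fun j => ‖x - C j‖)
          ⟨⟨0, hk⟩, Finset.mem_univ _⟩
      exact ⟨j, Finset.mem_filter.2 ⟨Finset.mem_univ _, fun m => hj m (Finset.mem_univ m)⟩⟩)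

/-- The `L²(P)` norm of a real random variable, `‖W‖_{L²} = (E W²)^{1/2}`. -/
noncomputable def l2norm {Ω : Type*} {m : MeasurableSpace Ω} (P : Measure Ω) (f : Ω → ℝ) : ℝ :=
  Real.sqrt (∫ ω, (f ω) ^ 2 ∂P)

lemma nearS {p k : ℕ} (hk : 0 < k) (C : Fin k → EuclideanSpace ℝ (Fin p))
    (x : EuclideanSpace ℝ (Fin p)) :
    (Finset.univ.filter fun j => ∀ m, ‖x - C j‖ ≤ ‖x - C m‖).Nonempty := by
  obtain ⟨j, -, hj⟩ :=
    Finset.exists_min_image (Finset.univ : Finset (Fin k)) (fun j => ‖x - C j‖)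
      ⟨⟨0, hk⟩, Finset.mem_univ _⟩
  exact ⟨j, Finset.mem_filter.2 ⟨Finset.mem_univ _, fun m => hj m (Finset.mem_univ m)⟩⟩

lemma nearestIdx_spec {p k : ℕ} (hk : 0 < k) (C : Fin k → EuclideanSpace ℝ (Fin p))
    (x : EuclideanSpace ℝ (Fin p)) (m : Fin k) :
    ‖x - C (nearestIdx hk C x)‖ ≤ ‖x - C m‖ := by
  have h : nearestIdx hk C x ∈
      (Finset.univ.filter fun j => ∀ m, ‖x - C j‖ ≤ ‖x - C m‖) :=
    Finset.min'_mem _ (nearS hk C x)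
  exact (Finset.mem_filter.1 h).2 m

lemma nearestIdx_eq_iff {p k : ℕ} (hk : 0 < k) (C : Fin k → EuclideanSpace ℝ (Fin p))
    (x : EuclideanSpace ℝ (Fin p)) (j : Fin k) :
    nearestIdx hk C x = j ↔ ((∀ m, ‖x - C j‖ ≤ ‖x - C m‖) ∧
      ∀ i : Fin k, (∀ m, ‖x - C i‖ ≤ ‖x - C m‖) → j ≤ i) := by
  constructor
  · rintro rfl
    refine ⟨nearestIdx_spec hk C x, fun i hi => Finset.min'_le _ _ ?_⟩
    exact Finset.mem_filter.2 ⟨Finset.mem_univ _, hi⟩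
  · rintro ⟨h1, h2⟩
    refine le_antisymm (Finset.min'_le _ _ (Finset.mem_filter.2 ⟨Finset.mem_univ _, h1⟩)) ?_
    exact h2 _ (nearestIdx_spec hk C x)

lemma measurable_nearestIdx {p k : ℕ} (hk : 0 < k) (C : Fin k → EuclideanSpace ℝ (Fin p)) :
    Measurable (nearestIdx hk C) := by
  apply measurable_to_countable'
  intro j
  have hms : ∀ i m : Fin k,
      MeasurableSet {x : EuclideanSpace ℝ (Fin p) | ‖x - C i‖ ≤ ‖x - C m‖} := by
    intro i m
    exact measurableSet_le ((continuous_id.sub continuous_const).norm.measurable)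
      ((continuous_id.sub continuous_const).norm.measurable)
  have heq : nearestIdx hk C ⁻¹' {j} =
      (⋂ m, {x : EuclideanSpace ℝ (Fin p) | ‖x - C j‖ ≤ ‖x - C m‖}) ∩
        ⋂ i : Fin k, {x : EuclideanSpace ℝ (Fin p) | (∀ m, ‖x - C i‖ ≤ ‖x - C m‖) → j ≤ i} := by
    ext x
    simp only [Set.mem_preimage, Set.mem_singleton_iff, nearestIdx_eq_iff hk C x j,
      Set.mem_inter_iff, Set.mem_iInter, Set.mem_setOf_eq]
  rw [heq]
  refine (MeasurableSet.iInter fun m => hms j m).inter (MeasurableSet.iInter fun i => ?_)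
  by_cases hji : j ≤ i
  · have : {x : EuclideanSpace ℝ (Fin p) | (∀ m, ‖x - C i‖ ≤ ‖x - C m‖) → j ≤ i} = Set.univ := by
      ext x; simp [hji]
    rw [this]; exact MeasurableSet.univ
  · have : {x : EuclideanSpace ℝ (Fin p) | (∀ m, ‖x - C i‖ ≤ ‖x - C m‖) → j ≤ i} =
        (⋂ m, {x : EuclideanSpace ℝ (Fin p) | ‖x - C i‖ ≤ ‖x - C m‖})ᶜ := by
      ext x; simp [hji]
    rw [this]; exact (MeasurableSet.iInter fun m => hms i m).compl

lemma sq_sum_nearest {p k : ℕ} (hk : 0 < k) (C : Fin k → EuclideanSpace ℝ (Fin p))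
    (f : Fin p → ℝ) (j : Fin k) :
    ∑ a, (f a - C (nearestIdx hk C (toE f)) a) ^ 2 ≤ ∑ a, (f a - C j a) ^ 2 := by
  have key : ∀ m : Fin k, ‖toE f - C m‖ ^ 2 = ∑ a, (f a - C m a) ^ 2 := by
    intro m
    rw [EuclideanSpace.norm_eq, Real.sq_sqrt (by positivity)]
    refine Finset.sum_congr rfl fun a _ => ?_
    rw [show (toE f - C m) a = f a - C m a from by simp [toE], Real.norm_eq_abs, sq_abs]
  have h := nearestIdx_spec hk C (toE f) j
  have h2 := pow_le_pow_left₀ (norm_nonneg _) h 2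
  rwa [key, key] at h2


lemma integrable_of_bound {Ω : Type} {m0 : MeasurableSpace Ω} (P : Measure Ω)
    [IsFiniteMeasure P] {f : Ω → ℝ} (hf : AEStronglyMeasurable f P) (M : ℝ)
    (h : ∀ᵐ ω ∂P, |f ω| ≤ M) : Integrable f P :=
  Integrable.mono' (integrable_const M) hf
    (by filter_upwards [h] with ω h; simpa [Real.norm_eq_abs] using h)

lemma key_vanish {Ω : Type} {m0 : MeasurableSpace Ω} {P : Measure Ω}
    [IsProbabilityMeasure P] {𝔊 : MeasurableSpace Ω} (h𝔊 : 𝔊 ≤ m0)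
    {Y ind πa μa f : Ω → ℝ} (hY : Measurable[m0] Y) (hind : Measurable[m0] ind)
    {B M : ℝ}
    (hYb : ∀ᵐ ω ∂P, |Y ω| ≤ B) (hindb : ∀ ω, |ind ω| ≤ 1)
    (hπ : πa =ᵐ[P] P[ind|𝔊])
    (hμ : Measurable[𝔊] μa) (hμb : ∀ᵐ ω ∂P, |μa ω| ≤ B)
    (hmul : (fun ω => πa ω * μa ω) =ᵐ[P] P[fun ω => Y ω * ind ω|𝔊])
    (hf : Measurable[𝔊] f) (hfb : ∀ᵐ ω ∂P, |f ω| ≤ M) :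
    ∫ ω, f ω * (ind ω * (Y ω - μa ω)) ∂P = 0 := by
  have hf0 : Measurable[m0] f := hf.mono h𝔊 le_rfl
  have hμ0 : Measurable[m0] μa := hμ.mono h𝔊 le_rfl
  have hg : Integrable (fun ω => Y ω * ind ω) P := by
    refine integrable_of_bound P ((hY.mul hind).aestronglyMeasurable) B ?_
    filter_upwards [hYb] with ω h1
    calc |Y ω * ind ω| = |Y ω| * |ind ω| := abs_mul _ _
      _ ≤ B * 1 := by
        apply mul_le_mul h1 (hindb ω) (abs_nonneg _) (le_trans (abs_nonneg _) h1)
      _ = B := mul_one B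
  have hfg : Integrable (f * fun ω => Y ω * ind ω) P := by
    refine integrable_of_bound P ((hf0.mul (hY.mul hind)).aestronglyMeasurable) (M * B) ?_
    filter_upwards [hYb, hfb] with ω h1 h2
    calc |(f * fun ω => Y ω * ind ω) ω| = |f ω| * (|Y ω| * |ind ω|) := by
          simp only [Pi.mul_apply]; rw [abs_mul, abs_mul]
      _ ≤ M * (B * 1) := by
        refine mul_le_mul h2 ?_ (by positivity) (le_trans (abs_nonneg _) h2)
        exact mul_le_mul h1 (hindb ω) (abs_nonneg _) (le_trans (abs_nonneg _) h1)
      _ = M * B := by ring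
  have hind_int : Integrable ind P :=
    integrable_of_bound P hind.aestronglyMeasurable 1 (Filter.Eventually.of_forall hindb)
  have hfμind : Integrable ((fun ω => f ω * μa ω) * ind) P := by
    refine integrable_of_bound P (((hf0.mul hμ0).mul hind).aestronglyMeasurable) (M * B) ?_
    filter_upwards [hμb, hfb] with ω h1 h2
    calc |((fun ω => f ω * μa ω) * ind) ω| = |f ω| * |μa ω| * |ind ω| := by
          simp only [Pi.mul_apply]; rw [abs_mul, abs_mul]
      _ ≤ M * B * 1 := by
        refine mul_le_mul ?_ (hindb ω) (abs_nonneg _)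
          (mul_nonneg (le_trans (abs_nonneg _) h2) (le_trans (abs_nonneg _) h1))
        exact mul_le_mul h2 h1 (abs_nonneg _) (le_trans (abs_nonneg _) h2)
      _ = M * B := mul_one _
  have e1 : ∫ ω, f ω * (Y ω * ind ω) ∂P = ∫ ω, f ω * (πa ω * μa ω) ∂P := by
    have hce := condExp_mul_of_stronglyMeasurable_left (μ := P) (m := 𝔊)
      hf.stronglyMeasurable hfg hg
    calc ∫ ω, f ω * (Y ω * ind ω) ∂P = ∫ ω, (f * fun ω => Y ω * ind ω) ω ∂P := rfl
      _ = ∫ ω, (P[f * fun ω => Y ω * ind ω|𝔊]) ω ∂P := (integral_condExp h𝔊).symm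
      _ = ∫ ω, (f * P[fun ω => Y ω * ind ω|𝔊]) ω ∂P := integral_congr_ae hce
      _ = ∫ ω, f ω * (πa ω * μa ω) ∂P := by
          refine integral_congr_ae ?_
          filter_upwards [hmul] with ω h
          simp only [Pi.mul_apply]
          rw [← h]
  have e2 : ∫ ω, (f ω * μa ω) * ind ω ∂P = ∫ ω, (f ω * μa ω) * πa ω ∂P := by
    have hce := condExp_mul_of_stronglyMeasurable_left (μ := P) (m := 𝔊)
      (hf.mul hμ).stronglyMeasurable hfμind hind_int
    calc ∫ ω, (f ω * μa ω) * ind ω ∂P = ∫ ω, ((fun ω => f ω * μa ω) * ind) ω ∂P := rfl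
      _ = ∫ ω, (P[(fun ω => f ω * μa ω) * ind|𝔊]) ω ∂P := (integral_condExp h𝔊).symm
      _ = ∫ ω, ((fun ω => f ω * μa ω) * P[ind|𝔊]) ω ∂P := integral_congr_ae hce
      _ = ∫ ω, (f ω * μa ω) * πa ω ∂P := by
          refine integral_congr_ae ?_
          filter_upwards [hπ] with ω h
          simp only [Pi.mul_apply]
          rw [h]
  have split : ∫ ω, f ω * (ind ω * (Y ω - μa ω)) ∂P =
      ∫ ω, f ω * (Y ω * ind ω) ∂P - ∫ ω, (f ω * μa ω) * ind ω ∂P := by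
    have h3 : ∫ ω, f ω * (ind ω * (Y ω - μa ω)) ∂P =
        ∫ ω, ((f * fun ω => Y ω * ind ω) ω - ((fun ω => f ω * μa ω) * ind) ω) ∂P := by
      refine integral_congr_ae (Filter.Eventually.of_forall fun ω => ?_)
      simp only [Pi.mul_apply]
      ring
    rw [h3, integral_sub hfg hfμind]
    rfl
  rw [split, e1, e2]
  have : ∫ ω, f ω * (πa ω * μa ω) ∂P = ∫ ω, (f ω * μa ω) * πa ω ∂P := by
    refine integral_congr_ae (Filter.Eventually.of_forall fun ω => ?_)
    ring_nf
  rw [this, sub_self]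

lemma phiC_summand_rw {Ω : Type} {p k : ℕ} (hk : 0 < k)
    (A : Ω → Fin p) (Y : Ω → ℝ) (π' μ' μv : Fin p → Ω → ℝ)
    (C : Fin k → EuclideanSpace ℝ (Fin p)) (a : Fin p) (ω : Ω) :
    ((2 * μ' a ω * ((if A ω = a then (1 : ℝ) else 0) / π' a ω) * (Y ω - μ' (A ω) ω)
          + μ' a ω ^ 2)
    - 2 * (((if A ω = a then (1 : ℝ) else 0) / π' a ω) * (Y ω - μ' (A ω) ω) + μ' a ω)
        * C (nearestIdx hk C (toE fun b => μ' b ω)) a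
    + C (nearestIdx hk C (toE fun b => μ' b ω)) a ^ 2)
    = ((2 * μ' a ω - 2 * C (nearestIdx hk C (toE fun b => μ' b ω)) a) / π' a ω)
        * ((if A ω = a then (1 : ℝ) else 0) * (Y ω - μv a ω))
      - ((2 * μ' a ω - 2 * C (nearestIdx hk C (toE fun b => μ' b ω)) a) / π' a ω)
        * ((if A ω = a then (1 : ℝ) else 0) * (μ' a ω - μv a ω))
      + (μ' a ω - C (nearestIdx hk C (toE fun b => μ' b ω)) a) ^ 2 := by
  by_cases h : A ω = a
  · subst h
    simp only [if_pos rfl]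
    ring
  · simp only [if_neg h]
    ring

/-- The uncentered influence function
`φ_C(η) = Σ_a {φ_{2,a}(η) − 2φ_{1,a}(η)[Π_C(μ)]_a + [Π_C(μ)]_a²}`, where
`φ_{1,a}(η) = (𝟙{A=a}/π_a)(Y − μ_A) + μ_a`,
`φ_{2,a}(η) = 2μ_a(𝟙{A=a}/π_a)(Y − μ_A) + μ_a²`, and `Π_C(μ) = c_{d(μ;C)}`. -/
noncomputable def phiC {Ω : Type*} {p k : ℕ} (hk : 0 < k)
    (A : Ω → Fin p) (Y : Ω → ℝ) (π μ : Fin p → Ω → ℝ)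
    (C : Fin k → EuclideanSpace ℝ (Fin p)) (ω : Ω) : ℝ :=
  ∑ a, ((2 * μ a ω * ((if A ω = a then (1 : ℝ) else 0) / π a ω) * (Y ω - μ (A ω) ω)
          + μ a ω ^ 2)
    - 2 * (((if A ω = a then (1 : ℝ) else 0) / π a ω) * (Y ω - μ (A ω) ω) + μ a ω)
        * C (nearestIdx hk C (toE fun b => μ b ω)) a
    + C (nearestIdx hk C (toE fun b => μ b ω)) a ^ 2)

lemma phiC_integral_repr {Ω : Type} {m0 : MeasurableSpace Ω} {P : Measure Ω}
    [IsProbabilityMeasure P] {𝔊 : MeasurableSpace Ω} (h𝔊 : 𝔊 ≤ m0)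
    {p k : ℕ} (hk : 0 < k) {A : Ω → Fin p} (hA : Measurable[m0] A)
    {Y : Ω → ℝ} (hY : Measurable[m0] Y) {B ε : ℝ} (hB : 0 < B) (hε : 0 < ε)
    (hYb : ∀ᵐ ω ∂P, |Y ω| ≤ B)
    {π μv : Fin p → Ω → ℝ}
    (hπce : ∀ a, π a =ᵐ[P] P[fun ω => if A ω = a then (1 : ℝ) else 0|𝔊])
    (hμm : ∀ a, Measurable[𝔊] (μv a)) (hμb : ∀ a, ∀ᵐ ω ∂P, |μv a ω| ≤ B)
    (hmul : ∀ a, (fun ω => π a ω * μv a ω)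
        =ᵐ[P] P[fun ω => Y ω * (if A ω = a then (1 : ℝ) else 0)|𝔊])
    {π' μ' : Fin p → Ω → ℝ}
    (hπ'm : ∀ a, Measurable[𝔊] (π' a)) (hμ'm : ∀ a, Measurable[𝔊] (μ' a))
    (hμ'b : ∀ a, ∀ᵐ ω ∂P, |μ' a ω| ≤ B) (hπ'ε : ∀ a, ∀ᵐ ω ∂P, ε ≤ π' a ω)
    {C : Fin k → EuclideanSpace ℝ (Fin p)} (hC : ∀ j a, |C j a| ≤ B) :
    ∫ ω, phiC hk A Y π' μ' C ω ∂P =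
      ∫ ω, (∑ a, (-((((2 * μ' a ω - 2 * C (nearestIdx hk C (toE fun b => μ' b ω)) a) / π' a ω))
            * ((if A ω = a then (1 : ℝ) else 0) * (μ' a ω - μv a ω)))
        + (μ' a ω - C (nearestIdx hk C (toE fun b => μ' b ω)) a) ^ 2)) ∂P := by
  -- abbreviations
  set c' : Fin p → Ω → ℝ := fun a ω => C (nearestIdx hk C (toE fun b => μ' b ω)) a with hc'
  set s' : Fin p → Ω → ℝ := fun a ω => (2 * μ' a ω - 2 * c' a ω) / π' a ω with hs'
  set ind : Fin p → Ω → ℝ := fun a ω => if A ω = a then (1 : ℝ) else 0 with hind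
  -- measurability of pieces
  have hc'G : ∀ a, Measurable[𝔊] (c' a) := by
    intro a
    have h1 : Measurable[𝔊] (fun ω => toE fun b => μ' b ω) :=
      (WithLp.measurable_toLp 2 _).comp (measurable_pi_lambda _ fun b => hμ'm b)
    exact (measurable_of_countable (fun j : Fin k => C j a)).comp
      ((measurable_nearestIdx hk C).comp h1)
  have hs'G : ∀ a, Measurable[𝔊] (s' a) := fun a =>
    ((measurable_const.mul (hμ'm a)).sub (measurable_const.mul (hc'G a))).div (hπ'm a)
  have hs'0 : ∀ a, Measurable[m0] (s' a) := fun a => (hs'G a).mono h𝔊 le_rfl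
  have hindm : ∀ a, Measurable[m0] (ind a) := fun a =>
    Measurable.ite (hA (MeasurableSet.singleton a)) measurable_const measurable_const
  have hindb : ∀ a ω, |ind a ω| ≤ 1 := by
    intro a ω; by_cases h : A ω = a <;> simp [hind, h]
  have hμ'0 : ∀ a, Measurable[m0] (μ' a) := fun a => (hμ'm a).mono h𝔊 le_rfl
  have hμv0 : ∀ a, Measurable[m0] (μv a) := fun a => (hμm a).mono h𝔊 le_rfl
  -- bound on s'
  have hs'b : ∀ a, ∀ᵐ ω ∂P, |s' a ω| ≤ 4 * B / ε := by
    intro a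
    filter_upwards [hμ'b a, hπ'ε a] with ω h1 h2
    rw [hs', abs_div]
    have hπpos : (0:ℝ) < π' a ω := lt_of_lt_of_le hε h2
    rw [abs_of_pos hπpos]
    apply div_le_div₀ (by positivity) ?_ hε h2
    calc |2 * μ' a ω - 2 * c' a ω| ≤ |2 * μ' a ω| + |2 * c' a ω| := abs_sub _ _
      _ = 2 * |μ' a ω| + 2 * |c' a ω| := by rw [abs_mul, abs_mul]; norm_num
      _ ≤ 2 * B + 2 * B := by
          have hcb : |c' a ω| ≤ B := hC _ a
          linarith [h1, hcb]
      _ = 4 * B := by ring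
  -- integrability of the three pieces
  have hc'0 : ∀ a, Measurable[m0] (c' a) := fun a => (hc'G a).mono h𝔊 le_rfl
  have hT1int : ∀ a, Integrable (fun ω => s' a ω * (ind a ω * (Y ω - μv a ω))) P := by
    intro a
    refine integrable_of_bound P
      (((hs'0 a).mul ((hindm a).mul (hY.sub (hμv0 a)))).aestronglyMeasurable) (4 * B / ε * (2 * B)) ?_
    filter_upwards [hs'b a, hYb, hμb a] with ω h1 h2 h3
    rw [abs_mul, abs_mul]
    have e1 : |ind a ω| * |Y ω - μv a ω| ≤ 1 * (2 * B) := by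
      refine mul_le_mul (hindb a ω) ?_ (abs_nonneg _) zero_le_one
      calc |Y ω - μv a ω| ≤ |Y ω| + |μv a ω| := abs_sub _ _
        _ ≤ 2 * B := by linarith
    calc |s' a ω| * (|ind a ω| * |Y ω - μv a ω|) ≤ (4 * B / ε) * (1 * (2 * B)) :=
          mul_le_mul h1 e1 (by positivity) (by positivity)
      _ = 4 * B / ε * (2 * B) := by ring
  have hT2int : ∀ a, Integrable (fun ω => s' a ω * (ind a ω * (μ' a ω - μv a ω))) P := by
    intro a
    refine integrable_of_bound P
      (((hs'0 a).mul ((hindm a).mul ((hμ'0 a).sub (hμv0 a)))).aestronglyMeasurable)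
      (4 * B / ε * (2 * B)) ?_
    filter_upwards [hs'b a, hμ'b a, hμb a] with ω h1 h2 h3
    rw [abs_mul, abs_mul]
    have e1 : |ind a ω| * |μ' a ω - μv a ω| ≤ 1 * (2 * B) := by
      refine mul_le_mul (hindb a ω) ?_ (abs_nonneg _) zero_le_one
      calc |μ' a ω - μv a ω| ≤ |μ' a ω| + |μv a ω| := abs_sub _ _
        _ ≤ 2 * B := by linarith
    calc |s' a ω| * (|ind a ω| * |μ' a ω - μv a ω|) ≤ (4 * B / ε) * (1 * (2 * B)) :=
          mul_le_mul h1 e1 (by positivity) (by positivity)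
      _ = 4 * B / ε * (2 * B) := by ring
  have hT3int : ∀ a, Integrable (fun ω => (μ' a ω - c' a ω) ^ 2) P := by
    intro a
    refine integrable_of_bound P
      ((((hμ'0 a).sub (hc'0 a)).pow_const 2).aestronglyMeasurable) ((2 * B) ^ 2) ?_
    filter_upwards [hμ'b a] with ω h1
    have hcb : |c' a ω| ≤ B := hC _ a
    have : |μ' a ω - c' a ω| ≤ 2 * B := by
      calc |μ' a ω - c' a ω| ≤ |μ' a ω| + |c' a ω| := abs_sub _ _
        _ ≤ 2 * B := by linarith
    calc |(μ' a ω - c' a ω) ^ 2| = |μ' a ω - c' a ω| ^ 2 := abs_pow _ _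
      _ ≤ (2 * B) ^ 2 := pow_le_pow_left₀ (abs_nonneg _) this 2
  -- the stochastic terms vanish
  have hvanish : ∀ a, ∫ ω, s' a ω * (ind a ω * (Y ω - μv a ω)) ∂P = 0 := by
    intro a
    exact key_vanish h𝔊 hY (hindm a) hYb (hindb a) (hπce a) (hμm a) (hμb a)
      (hmul a) (hs'G a) (hs'b a)
  have hrw : ∀ ω, phiC hk A Y π' μ' C ω =
      ∑ a, (s' a ω * (ind a ω * (Y ω - μv a ω))
        - s' a ω * (ind a ω * (μ' a ω - μv a ω)) + (μ' a ω - c' a ω) ^ 2) := by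
    intro ω
    unfold phiC
    refine Finset.sum_congr rfl fun a _ => ?_
    simp only [hs', hc', hind]
    exact phiC_summand_rw hk A Y π' μ' μv C a ω
  calc ∫ ω, phiC hk A Y π' μ' C ω ∂P
      = ∫ ω, (∑ a, (s' a ω * (ind a ω * (Y ω - μv a ω))
          - s' a ω * (ind a ω * (μ' a ω - μv a ω)) + (μ' a ω - c' a ω) ^ 2)) ∂P :=
        integral_congr_ae (Filter.Eventually.of_forall hrw)
    _ = ∑ a, ∫ ω, (s' a ω * (ind a ω * (Y ω - μv a ω))
          - s' a ω * (ind a ω * (μ' a ω - μv a ω)) + (μ' a ω - c' a ω) ^ 2) ∂P :=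
        integral_finset_sum _ (fun a _ => (((hT1int a).sub (hT2int a)).add (hT3int a)))
    _ = ∑ a, (∫ ω, s' a ω * (ind a ω * (Y ω - μv a ω)) ∂P
          - ∫ ω, s' a ω * (ind a ω * (μ' a ω - μv a ω)) ∂P
          + ∫ ω, (μ' a ω - c' a ω) ^ 2 ∂P) := by
        refine Finset.sum_congr rfl fun a _ => ?_
        have hsub : Integrable (fun ω => s' a ω * (ind a ω * (Y ω - μv a ω))
            - s' a ω * (ind a ω * (μ' a ω - μv a ω))) P := (hT1int a).sub (hT2int a)
        rw [integral_add hsub (hT3int a), integral_sub (hT1int a) (hT2int a)]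
    _ = ∑ a, ∫ ω, (-(s' a ω * (ind a ω * (μ' a ω - μv a ω))) + (μ' a ω - c' a ω) ^ 2) ∂P := by
        refine Finset.sum_congr rfl fun a _ => ?_
        have hneg : Integrable (fun ω => -(s' a ω * (ind a ω * (μ' a ω - μv a ω)))) P :=
          (hT2int a).neg
        rw [hvanish a, integral_add hneg (hT3int a), integral_neg]
        ring
    _ = ∫ ω, (∑ a, (-(s' a ω * (ind a ω * (μ' a ω - μv a ω))) + (μ' a ω - c' a ω) ^ 2)) ∂P :=
        (integral_finset_sum _ (fun a _ => (((hT2int a).neg :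
          Integrable (fun ω => -(s' a ω * (ind a ω * (μ' a ω - μv a ω)))) P).add
            (hT3int a)))).symm
    _ = ∫ ω, (∑ a, (-((((2 * μ' a ω - 2 * C (nearestIdx hk C (toE fun b => μ' b ω)) a) / π' a ω))
            * ((if A ω = a then (1 : ℝ) else 0) * (μ' a ω - μv a ω)))
        + (μ' a ω - C (nearestIdx hk C (toE fun b => μ' b ω)) a) ^ 2)) ∂P := by
        refine integral_congr_ae (Filter.Eventually.of_forall fun ω => ?_)
        refine Finset.sum_congr rfl fun a _ => ?_
        simp only [hs', hc', hind]
/-- In the multi-treatment setting, there is a constant `c` depending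
only on `B, ε, k, p` such that, uniformly over codebooks `C` with all center coordinates
bounded by `B`, `|E[φ_C(η̂)] − E[φ_C(η)]| ≤ c·( max_a E|μ̂_a − μ_a| +
max_a ‖μ̂_a − μ_a‖_{L²}(‖μ̂_a − μ_a‖_{L²} + ‖π̂_a − π_a‖_{L²}) )`. -/
theorem stmt_16 (B ε : ℝ) (hB : 0 < B) (hε : 0 < ε) (k p : ℕ) (hk : 0 < k) :
    ∃ c : ℝ, 0 ≤ c ∧
      ∀ (Ω : Type) (m0 : MeasurableSpace Ω) (P : Measure Ω), IsProbabilityMeasure P →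
      ∀ 𝔊 : MeasurableSpace Ω, 𝔊 ≤ m0 →
      ∀ A : Ω → Fin p, Measurable A →
      ∀ Y : Ω → ℝ, Measurable Y → (∀ᵐ ω ∂P, |Y ω| ≤ B) →
      ∀ π μv : Fin p → Ω → ℝ,
        (∀ a, Measurable[𝔊] (π a)) →
        (∀ a, π a =ᵐ[P] P[fun ω => if A ω = a then (1 : ℝ) else 0|𝔊]) →
        (∀ a, ∀ᵐ ω ∂P, ε ≤ π a ω) →
        (∀ a, Measurable[𝔊] (μv a)) → (∀ a, ∀ᵐ ω ∂P, |μv a ω| ≤ B) →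
        (∀ a, (fun ω => π a ω * μv a ω)
            =ᵐ[P] P[fun ω => Y ω * (if A ω = a then (1 : ℝ) else 0)|𝔊]) →
      ∀ μh πh : Fin p → Ω → ℝ,
        (∀ a, Measurable[𝔊] (μh a)) → (∀ a, Measurable[𝔊] (πh a)) →
        (∀ a, ∀ᵐ ω ∂P, |μh a ω| ≤ B) →
        (∀ a, ∀ᵐ ω ∂P, ε ≤ πh a ω ∧ πh a ω ≤ 1) →
      ∀ C : Fin k → EuclideanSpace ℝ (Fin p), (∀ j a, |C j a| ≤ B) →
        |∫ ω, phiC hk A Y πh μh C ω ∂P - ∫ ω, phiC hk A Y π μv C ω ∂P| ≤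
          c * ((⨆ a : Fin p, ∫ ω, |μh a ω - μv a ω| ∂P) +
            ⨆ a : Fin p, l2norm P (fun ω => μh a ω - μv a ω) *
              (l2norm P (fun ω => μh a ω - μv a ω) +
                l2norm P (fun ω => πh a ω - π a ω))) := by
  refine ⟨(p : ℝ) * (4 * B / ε + 4 * B), by positivity, ?_⟩
  intro Ω m0 P hP 𝔊 h𝔊 A hA Y hY hYb π μv hπm hπce hπε hμm hμb hmul μh πh hμhm hπhm hμhb hπhb C hC
  have hA0 : Measurable[m0] A := hA.mono h𝔊 le_rfl
  have hY0 : Measurable[m0] Y := hY.mono h𝔊 le_rfl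
  have hπhε : ∀ a, ∀ᵐ ω ∂P, ε ≤ πh a ω := fun a => (hπhb a).mono fun ω h => h.1
  -- representation of both integrals
  have R1 := phiC_integral_repr h𝔊 hk hA0 hY0 hB hε hYb hπce hμm hμb hmul
    hπhm hμhm hμhb hπhε hC
  have R2 := phiC_integral_repr h𝔊 hk hA0 hY0 hB hε hYb hπce hμm hμb hmul
    hπm hμm hμb hπε hC
  rw [R1, R2]
  -- abbreviations
  set ch : Fin p → Ω → ℝ := fun a ω => C (nearestIdx hk C (toE fun b => μh b ω)) a with hch
  set cv : Fin p → Ω → ℝ := fun a ω => C (nearestIdx hk C (toE fun b => μv b ω)) a with hcv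
  set sh : Fin p → Ω → ℝ := fun a ω => (2 * μh a ω - 2 * ch a ω) / πh a ω with hsh
  set ind : Fin p → Ω → ℝ := fun a ω => if A ω = a then (1 : ℝ) else 0 with hind
  -- measurability
  have hchG : ∀ a, Measurable[𝔊] (ch a) := by
    intro a
    have h1 : Measurable[𝔊] (fun ω => toE fun b => μh b ω) :=
      (WithLp.measurable_toLp 2 _).comp (measurable_pi_lambda _ fun b => hμhm b)
    exact (measurable_of_countable (fun j : Fin k => C j a)).comp
      ((measurable_nearestIdx hk C).comp h1)
  have hcvG : ∀ a, Measurable[𝔊] (cv a) := by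
    intro a
    have h1 : Measurable[𝔊] (fun ω => toE fun b => μv b ω) :=
      (WithLp.measurable_toLp 2 _).comp (measurable_pi_lambda _ fun b => hμm b)
    exact (measurable_of_countable (fun j : Fin k => C j a)).comp
      ((measurable_nearestIdx hk C).comp h1)
  have hμh0 : ∀ a, Measurable[m0] (μh a) := fun a => (hμhm a).mono h𝔊 le_rfl
  have hμv0 : ∀ a, Measurable[m0] (μv a) := fun a => (hμm a).mono h𝔊 le_rfl
  have hπh0 : ∀ a, Measurable[m0] (πh a) := fun a => (hπhm a).mono h𝔊 le_rfl
  have hch0 : ∀ a, Measurable[m0] (ch a) := fun a => (hchG a).mono h𝔊 le_rfl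
  have hcv0 : ∀ a, Measurable[m0] (cv a) := fun a => (hcvG a).mono h𝔊 le_rfl
  have hsh0 : ∀ a, Measurable[m0] (sh a) := fun a =>
    ((measurable_const.mul (hμh0 a)).sub (measurable_const.mul (hch0 a))).div (hπh0 a)
  have hind0 : ∀ a, Measurable[m0] (ind a) := fun a =>
    Measurable.ite (hA0 (MeasurableSet.singleton a)) measurable_const measurable_const
  have hindb : ∀ a ω, |ind a ω| ≤ 1 := by
    intro a ω; by_cases h : A ω = a <;> simp [hind, h]
  -- bound on sh
  have hshb : ∀ a, ∀ᵐ ω ∂P, |sh a ω| ≤ 4 * B / ε := by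
    intro a
    filter_upwards [hμhb a, hπhε a] with ω h1 h2
    rw [hsh, abs_div]
    have hπpos : (0:ℝ) < πh a ω := lt_of_lt_of_le hε h2
    rw [abs_of_pos hπpos]
    apply div_le_div₀ (by positivity) ?_ hε h2
    calc |2 * μh a ω - 2 * ch a ω| ≤ |2 * μh a ω| + |2 * ch a ω| := abs_sub _ _
      _ = 2 * |μh a ω| + 2 * |ch a ω| := by rw [abs_mul, abs_mul]; norm_num
      _ ≤ 2 * B + 2 * B := by
          have hcb : |ch a ω| ≤ B := hC _ a
          linarith [h1, hcb]
      _ = 4 * B := by ring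
  -- the two integrands
  set W : Ω → ℝ := fun ω => ∑ a, (-(sh a ω * (ind a ω * (μh a ω - μv a ω)))
      + (μh a ω - ch a ω) ^ 2) with hW
  set V : Ω → ℝ := fun ω => ∑ a, (-(((2 * μv a ω - 2 * cv a ω) / π a ω)
      * (ind a ω * (μv a ω - μv a ω))) + (μv a ω - cv a ω) ^ 2) with hV
  have hVs : ∀ ω, V ω = ∑ a, (μv a ω - cv a ω) ^ 2 := by
    intro ω
    rw [hV]
    refine Finset.sum_congr rfl fun a _ => ?_
    simp
  suffices hS : |∫ ω, W ω ∂P - ∫ ω, V ω ∂P| ≤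
      ((p : ℝ) * (4 * B / ε + 4 * B)) * ((⨆ a : Fin p, ∫ ω, |μh a ω - μv a ω| ∂P) +
        ⨆ a : Fin p, l2norm P (fun ω => μh a ω - μv a ω) *
          (l2norm P (fun ω => μh a ω - μv a ω) +
            l2norm P (fun ω => πh a ω - π a ω))) by exact hS
  -- integrability
  have hWmeas : Measurable[m0] W := by
    rw [hW]
    exact Finset.measurable_sum _ fun a _ =>
      (((hsh0 a).mul ((hind0 a).mul ((hμh0 a).sub (hμv0 a)))).neg).add
        (((hμh0 a).sub (hch0 a)).pow_const 2)
  have hVmeas : Measurable[m0] V := by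
    rw [hV]
    refine Finset.measurable_sum _ fun a _ => Measurable.add ?_ ?_
    · exact (((measurable_const.mul (hμv0 a)).sub (measurable_const.mul (hcv0 a))).div
        ((hπm a).mono h𝔊 le_rfl)).mul ((hind0 a).mul ((hμv0 a).sub (hμv0 a))) |>.neg
    · exact ((hμv0 a).sub (hcv0 a)).pow_const 2
  have hae1 : ∀ᵐ ω ∂P, ∀ a, |μh a ω| ≤ B := ae_all_iff.2 hμhb
  have hae2 : ∀ᵐ ω ∂P, ∀ a, |μv a ω| ≤ B := ae_all_iff.2 hμb
  have hae3 : ∀ᵐ ω ∂P, ∀ a, |sh a ω| ≤ 4 * B / ε := ae_all_iff.2 hshb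
  have hWint : Integrable W P := by
    refine integrable_of_bound P hWmeas.aestronglyMeasurable
      ((p : ℝ) * (4 * B / ε * (2 * B) + (2 * B) ^ 2)) ?_
    filter_upwards [hae1, hae2, hae3] with ω h1 h2 h3
    rw [hW]
    calc |∑ a, (-(sh a ω * (ind a ω * (μh a ω - μv a ω))) + (μh a ω - ch a ω) ^ 2)|
        ≤ ∑ a, |(-(sh a ω * (ind a ω * (μh a ω - μv a ω))) + (μh a ω - ch a ω) ^ 2)| :=
          Finset.abs_sum_le_sum_abs _ _
      _ ≤ ∑ _a : Fin p, (4 * B / ε * (2 * B) + (2 * B) ^ 2) := by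
          refine Finset.sum_le_sum fun a _ => ?_
          have e1 : |μh a ω - μv a ω| ≤ 2 * B := by
            calc |μh a ω - μv a ω| ≤ |μh a ω| + |μv a ω| := abs_sub _ _
              _ ≤ 2 * B := by linarith [h1 a, h2 a]
          have e2 : |μh a ω - ch a ω| ≤ 2 * B := by
            calc |μh a ω - ch a ω| ≤ |μh a ω| + |ch a ω| := abs_sub _ _
              _ ≤ 2 * B := by linarith [h1 a, hC (nearestIdx hk C (toE fun b => μh b ω)) a]
          calc |(-(sh a ω * (ind a ω * (μh a ω - μv a ω))) + (μh a ω - ch a ω) ^ 2)|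
              ≤ |sh a ω * (ind a ω * (μh a ω - μv a ω))| + |(μh a ω - ch a ω) ^ 2| := by
                rw [← abs_neg (sh a ω * (ind a ω * (μh a ω - μv a ω)))] at *
                exact abs_add_le _ _
            _ ≤ 4 * B / ε * (2 * B) + (2 * B) ^ 2 := by
                have b1 : |sh a ω * (ind a ω * (μh a ω - μv a ω))| ≤ 4 * B / ε * (2 * B) := by
                  rw [abs_mul, abs_mul]
                  have : |ind a ω| * |μh a ω - μv a ω| ≤ 1 * (2 * B) :=
                    mul_le_mul (hindb a ω) e1 (abs_nonneg _) zero_le_one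
                  calc |sh a ω| * (|ind a ω| * |μh a ω - μv a ω|)
                      ≤ (4 * B / ε) * (1 * (2 * B)) :=
                        mul_le_mul (h3 a) this (by positivity) (by positivity)
                    _ = 4 * B / ε * (2 * B) := by ring
                have b2 : |(μh a ω - ch a ω) ^ 2| ≤ (2 * B) ^ 2 := by
                  rw [abs_pow]
                  exact pow_le_pow_left₀ (abs_nonneg _) e2 2
                linarith
      _ = (p : ℝ) * (4 * B / ε * (2 * B) + (2 * B) ^ 2) := by
          rw [Finset.sum_const, Finset.card_univ, Fintype.card_fin, nsmul_eq_mul]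
  have hVint : Integrable V P := by
    refine integrable_of_bound P hVmeas.aestronglyMeasurable ((p : ℝ) * (2 * B) ^ 2) ?_
    filter_upwards [hae2] with ω h2
    rw [hVs ω]
    calc |∑ a, (μv a ω - cv a ω) ^ 2| ≤ ∑ a, |(μv a ω - cv a ω) ^ 2| :=
          Finset.abs_sum_le_sum_abs _ _
      _ ≤ ∑ _a : Fin p, (2 * B) ^ 2 := by
          refine Finset.sum_le_sum fun a _ => ?_
          rw [abs_pow]
          refine pow_le_pow_left₀ (abs_nonneg _) ?_ 2
          calc |μv a ω - cv a ω| ≤ |μv a ω| + |cv a ω| := abs_sub _ _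
            _ ≤ 2 * B := by linarith [h2 a, hC (nearestIdx hk C (toE fun b => μv b ω)) a]
      _ = (p : ℝ) * (2 * B) ^ 2 := by
          rw [Finset.sum_const, Finset.card_univ, Fintype.card_fin, nsmul_eq_mul]
  -- pointwise a.e. bound on |W - V|
  have hbound : ∀ᵐ ω ∂P, |W ω - V ω| ≤
      (4 * B / ε + 4 * B) * ∑ a, |μh a ω - μv a ω| := by
    filter_upwards [hae1, hae2, hae3] with ω h1 h2 h3
    rw [hVs ω, hW]
    have hsplit : (∑ a, (-(sh a ω * (ind a ω * (μh a ω - μv a ω))) + (μh a ω - ch a ω) ^ 2))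
        - ∑ a, (μv a ω - cv a ω) ^ 2
        = (∑ a, -(sh a ω * (ind a ω * (μh a ω - μv a ω))))
          + ((∑ a, (μh a ω - ch a ω) ^ 2) - ∑ a, (μv a ω - cv a ω) ^ 2) := by
      rw [Finset.sum_add_distrib]
      ring
    rw [hsplit]
    have hterm1 : |∑ a, -(sh a ω * (ind a ω * (μh a ω - μv a ω)))|
        ≤ (4 * B / ε) * ∑ a, |μh a ω - μv a ω| := by
      calc |∑ a, -(sh a ω * (ind a ω * (μh a ω - μv a ω)))|
          ≤ ∑ a, |(-(sh a ω * (ind a ω * (μh a ω - μv a ω))))| :=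
            Finset.abs_sum_le_sum_abs _ _
        _ ≤ ∑ a, (4 * B / ε) * |μh a ω - μv a ω| := by
            refine Finset.sum_le_sum fun a _ => ?_
            rw [abs_neg, abs_mul, abs_mul]
            calc |sh a ω| * (|ind a ω| * |μh a ω - μv a ω|)
                ≤ (4 * B / ε) * (1 * |μh a ω - μv a ω|) := by
                  refine mul_le_mul (h3 a) ?_ (by positivity) (by positivity)
                  exact mul_le_mul_of_nonneg_right (hindb a ω) (abs_nonneg _)
              _ = (4 * B / ε) * |μh a ω - μv a ω| := by ring
        _ = (4 * B / ε) * ∑ a, |μh a ω - μv a ω| := by rw [Finset.mul_sum]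
    have hsq : ∀ x y c : ℝ, |x| ≤ B → |y| ≤ B → |c| ≤ B →
        (x - c) ^ 2 - (y - c) ^ 2 ≤ 4 * B * |x - y| := by
      intro x y c hx hy hc
      have e : (x - c) ^ 2 - (y - c) ^ 2 = (x - y) * (x + y - 2 * c) := by ring
      rw [e]
      calc (x - y) * (x + y - 2 * c) ≤ |(x - y) * (x + y - 2 * c)| := le_abs_self _
        _ = |x - y| * |x + y - 2 * c| := abs_mul _ _
        _ ≤ |x - y| * (4 * B) := by
            refine mul_le_mul_of_nonneg_left ?_ (abs_nonneg _)
            calc |x + y - 2 * c| ≤ |x| + |y| + 2 * |c| := by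
                  have := abs_sub (x + y) (2 * c)
                  have h2 := abs_add_le x y
                  rw [abs_mul] at this
                  simp only [abs_two] at this
                  linarith
              _ ≤ 4 * B := by linarith
        _ = 4 * B * |x - y| := by ring
    have hterm2 : |(∑ a, (μh a ω - ch a ω) ^ 2) - ∑ a, (μv a ω - cv a ω) ^ 2|
        ≤ 4 * B * ∑ a, |μh a ω - μv a ω| := by
      rw [abs_sub_le_iff]
      constructor
      · have m1 : (∑ a, (μh a ω - ch a ω) ^ 2) ≤ ∑ a, (μh a ω - cv a ω) ^ 2 :=
          sq_sum_nearest hk C (fun b => μh b ω) (nearestIdx hk C (toE fun b => μv b ω))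
        have m2 : (∑ a, (μh a ω - cv a ω) ^ 2) - (∑ a, (μv a ω - cv a ω) ^ 2)
            ≤ ∑ a, 4 * B * |μh a ω - μv a ω| := by
          rw [← Finset.sum_sub_distrib]
          refine Finset.sum_le_sum fun a _ => ?_
          exact hsq _ _ _ (h1 a) (h2 a) (hC _ a)
        calc (∑ a, (μh a ω - ch a ω) ^ 2) - ∑ a, (μv a ω - cv a ω) ^ 2
            ≤ (∑ a, (μh a ω - cv a ω) ^ 2) - ∑ a, (μv a ω - cv a ω) ^ 2 := by linarith
          _ ≤ ∑ a, 4 * B * |μh a ω - μv a ω| := m2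
          _ = 4 * B * ∑ a, |μh a ω - μv a ω| := by rw [Finset.mul_sum]
      · have m1 : (∑ a, (μv a ω - cv a ω) ^ 2) ≤ ∑ a, (μv a ω - ch a ω) ^ 2 :=
          sq_sum_nearest hk C (fun b => μv b ω) (nearestIdx hk C (toE fun b => μh b ω))
        have m2 : (∑ a, (μv a ω - ch a ω) ^ 2) - (∑ a, (μh a ω - ch a ω) ^ 2)
            ≤ ∑ a, 4 * B * |μh a ω - μv a ω| := by
          rw [← Finset.sum_sub_distrib]
          refine Finset.sum_le_sum fun a _ => ?_
          have := hsq (μv a ω) (μh a ω) (ch a ω) (h2 a) (h1 a) (hC _ a)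
          rwa [abs_sub_comm] at this
        calc (∑ a, (μv a ω - cv a ω) ^ 2) - ∑ a, (μh a ω - ch a ω) ^ 2
            ≤ (∑ a, (μv a ω - ch a ω) ^ 2) - ∑ a, (μh a ω - ch a ω) ^ 2 := by linarith
          _ ≤ ∑ a, 4 * B * |μh a ω - μv a ω| := m2
          _ = 4 * B * ∑ a, |μh a ω - μv a ω| := by rw [Finset.mul_sum]
    calc |(∑ a, -(sh a ω * (ind a ω * (μh a ω - μv a ω))))
          + ((∑ a, (μh a ω - ch a ω) ^ 2) - ∑ a, (μv a ω - cv a ω) ^ 2)|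
        ≤ |∑ a, -(sh a ω * (ind a ω * (μh a ω - μv a ω)))|
          + |(∑ a, (μh a ω - ch a ω) ^ 2) - ∑ a, (μv a ω - cv a ω) ^ 2| := abs_add_le _ _
      _ ≤ (4 * B / ε) * (∑ a, |μh a ω - μv a ω|) + 4 * B * ∑ a, |μh a ω - μv a ω| := by
          linarith
      _ = (4 * B / ε + 4 * B) * ∑ a, |μh a ω - μv a ω| := by ring
  -- integral chain
  have hΔint : ∀ a, Integrable (fun ω => |μh a ω - μv a ω|) P := by
    intro a
    have habs0 : Measurable[m0] fun ω => μh a ω - μv a ω := (hμh0 a).sub (hμv0 a)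
    have hm : Measurable[m0] fun ω => |μh a ω - μv a ω| :=
      (continuous_abs.measurable).comp habs0
    refine integrable_of_bound P hm.aestronglyMeasurable (2 * B) ?_
    filter_upwards [hμhb a, hμb a] with ω e1 e2
    rw [abs_abs]
    calc |μh a ω - μv a ω| ≤ |μh a ω| + |μv a ω| := abs_sub _ _
      _ ≤ 2 * B := by linarith
  have hgint : Integrable (fun ω => (4 * B / ε + 4 * B) * ∑ a, |μh a ω - μv a ω|) P := by
    refine Integrable.const_mul ?_ _
    exact integrable_finset_sum _ fun a _ => hΔint a
  have habs : |∫ ω, W ω ∂P - ∫ ω, V ω ∂P| ≤ ∫ ω, |W ω - V ω| ∂P := by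
    rw [← integral_sub hWint hVint]
    calc |∫ ω, (W ω - V ω) ∂P| = ‖∫ ω, (W ω - V ω) ∂P‖ := (Real.norm_eq_abs _).symm
      _ ≤ ∫ ω, ‖W ω - V ω‖ ∂P := norm_integral_le_integral_norm _
      _ = ∫ ω, |W ω - V ω| ∂P := by simp [Real.norm_eq_abs]
  have hWVabs : Integrable (fun ω => |W ω - V ω|) P := (hWint.sub hVint).abs
  have hmono : ∫ ω, |W ω - V ω| ∂P ≤
      ∫ ω, ((4 * B / ε + 4 * B) * ∑ a, |μh a ω - μv a ω|) ∂P :=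
    integral_mono_ae hWVabs hgint hbound
  have hgeq : ∫ ω, ((4 * B / ε + 4 * B) * ∑ a, |μh a ω - μv a ω|) ∂P
      = (4 * B / ε + 4 * B) * ∑ a, ∫ ω, |μh a ω - μv a ω| ∂P := by
    rw [integral_const_mul, integral_finset_sum _ fun a _ => hΔint a]
  have hsup : ∑ a, ∫ ω, |μh a ω - μv a ω| ∂P
      ≤ (p : ℝ) * ⨆ a : Fin p, ∫ ω, |μh a ω - μv a ω| ∂P := by
    calc ∑ a, ∫ ω, |μh a ω - μv a ω| ∂P
        ≤ ∑ _a : Fin p, ⨆ a : Fin p, ∫ ω, |μh a ω - μv a ω| ∂P := by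
          refine Finset.sum_le_sum fun a _ => ?_
          exact le_ciSup (f := fun a : Fin p => ∫ ω, |μh a ω - μv a ω| ∂P)
            (Set.Finite.bddAbove (Set.finite_range _)) a
      _ = (p : ℝ) * ⨆ a : Fin p, ∫ ω, |μh a ω - μv a ω| ∂P := by
          rw [Finset.sum_const, Finset.card_univ, Fintype.card_fin, nsmul_eq_mul]
  have hS2 : 0 ≤ ⨆ a : Fin p, l2norm P (fun ω => μh a ω - μv a ω) *
      (l2norm P (fun ω => μh a ω - μv a ω) + l2norm P (fun ω => πh a ω - π a ω)) := by
    refine Real.iSup_nonneg fun a => ?_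
    have h1 : (0:ℝ) ≤ l2norm P (fun ω => μh a ω - μv a ω) := Real.sqrt_nonneg _
    have h2 : (0:ℝ) ≤ l2norm P (fun ω => πh a ω - π a ω) := Real.sqrt_nonneg _
    exact mul_nonneg h1 (add_nonneg h1 h2)
  have hcoef : (0:ℝ) ≤ 4 * B / ε + 4 * B := by positivity
  have hfinal : |∫ ω, W ω ∂P - ∫ ω, V ω ∂P| ≤
      ((p : ℝ) * (4 * B / ε + 4 * B)) * ⨆ a : Fin p, ∫ ω, |μh a ω - μv a ω| ∂P := by
    calc |∫ ω, W ω ∂P - ∫ ω, V ω ∂P| ≤ ∫ ω, |W ω - V ω| ∂P := habs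
      _ ≤ (4 * B / ε + 4 * B) * ∑ a, ∫ ω, |μh a ω - μv a ω| ∂P := by rw [← hgeq]; exact hmono
      _ ≤ (4 * B / ε + 4 * B) * ((p : ℝ) * ⨆ a : Fin p, ∫ ω, |μh a ω - μv a ω| ∂P) :=
          mul_le_mul_of_nonneg_left hsup hcoef
      _ = ((p : ℝ) * (4 * B / ε + 4 * B)) * ⨆ a : Fin p, ∫ ω, |μh a ω - μv a ω| ∂P := by ring
  have hc0 : (0:ℝ) ≤ (p : ℝ) * (4 * B / ε + 4 * B) := by positivity
  have := mul_nonneg hc0 hS2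
  nlinarith [hfinal]
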